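/- Define constants a^i_j for 0 ≤ j ≤ i by the recursion coming from T γ_s = (s+1)γ_s − γ_{s+1}: if δ^i ω = Σ_{j≤i} a^i_j ω_j where ω_s correspond to γ_s = (−π)^s ω_s and δ = −T, then a^i_j = (−1)^{i+j} π^j Σ_{α+β=j} (−1)^α (α+1)^i / (α! β!). Equivalently, purely algebraically: in the free module over ℚ[π] with basis (ω_s)_{s≥0}, define the operator δ by δ ω_s = −(s+1) ω_s − π ω_{s+1}; then δ^i ω_0 = Σ_{j=0}^{i} a^i_j ω_j with a^i_j = (−1)^{i+j} π^j Σ_{α+β=j, α,β≥0} (−1)^α (α+1)^i/(α!β!). -/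

import Mathlib

open Finset Polynomial

noncomputable def δop : (ℕ →₀ Polynomial ℚ) →ₗ[Polynomial ℚ] (ℕ →₀ Polynomial ℚ) :=
  Finsupp.lsum ℚ fun s : ℕ =>
    LinearMap.toSpanSingleton (Polynomial ℚ) (ℕ →₀ Polynomial ℚ)
      (Finsupp.single s (-((s : Polynomial ℚ) + 1)) + Finsupp.single (s + 1) (-Polynomial.X))

def Sc (i j : ℕ) : ℚ :=
  ∑ α ∈ Finset.range (j + 1),
    (-1 : ℚ) ^ α * ((α : ℚ) + 1) ^ i /
      ((α.factorial : ℚ) * ((j - α).factorial : ℚ))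

lemma Sc_zero_right (i : ℕ) : Sc i 0 = 1 := by simp [Sc]

lemma Sc_rec (i j : ℕ) : Sc (i + 1) (j + 1) = ((j : ℚ) + 2) * Sc i (j + 1) - Sc i j := by
  unfold Sc
  have e1 : ∀ α ∈ Finset.range (j + 1),
      (-1 : ℚ) ^ α * ((α : ℚ) + 1) ^ (i+1) / ((α.factorial : ℚ) * ((j + 1 - α).factorial : ℚ))
      = ((j:ℚ)+2) * ((-1 : ℚ) ^ α * ((α : ℚ) + 1) ^ i / ((α.factorial : ℚ) * ((j + 1 - α).factorial : ℚ)))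
        - (-1 : ℚ) ^ α * ((α : ℚ) + 1) ^ i / ((α.factorial : ℚ) * ((j - α).factorial : ℚ)) := by
    intro α hα
    rw [Finset.mem_range] at hα
    have hα' : α ≤ j := Nat.lt_succ_iff.mp hα
    have h1 : j + 1 - α = (j - α) + 1 := by omega
    have h2 : ((j - α : ℕ) : ℚ) = (j : ℚ) - α := Nat.cast_sub hα'
    rw [h1, Nat.factorial_succ]
    have hF : (α.factorial : ℚ) ≠ 0 := Nat.cast_ne_zero.mpr (Nat.factorial_ne_zero α)
    have hG : ((j - α).factorial : ℚ) ≠ 0 := Nat.cast_ne_zero.mpr (Nat.factorial_ne_zero _)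
    have hn : ((j - α : ℕ) : ℚ) + 1 ≠ 0 := by positivity
    have hn' : (j : ℚ) - (α : ℚ) + 1 ≠ 0 := by rw [← h2]; positivity
    field_simp
    push_cast [h2]
    ring
  rw [Finset.sum_range_succ, Finset.sum_congr rfl e1, Finset.sum_sub_distrib, Finset.mul_sum,
    Finset.sum_range_succ (n := j + 1)]
  simp [Nat.sub_self, pow_succ]
  ring

lemma Sc_eq_zero : ∀ i j : ℕ, i < j → Sc i j = 0 := by
  intro i
  induction i with
  | zero =>
    intro j hj
    have hjj : j ≠ 0 := by omega
    have key : (∑ α ∈ Finset.range (j+1), ((-1:ℚ)^α * (j.choose α))) = 0 := by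
      have := Int.alternating_sum_range_choose_of_ne hjj
      exact_mod_cast congrArg (fun z : ℤ => (z : ℚ)) this
    unfold Sc
    have e1 : ∀ α ∈ Finset.range (j+1),
        (-1 : ℚ) ^ α * ((α : ℚ) + 1) ^ 0 / ((α.factorial : ℚ) * ((j - α).factorial : ℚ))
        = ((-1:ℚ)^α * (j.choose α)) / (j.factorial : ℚ) := by
      intro α hα
      rw [Finset.mem_range] at hα
      have hα' : α ≤ j := Nat.lt_succ_iff.mp hα
      have hq : ((j.choose α : ℚ)) * (α.factorial : ℚ) * ((j-α).factorial : ℚ) = (j.factorial : ℚ) := by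
        exact_mod_cast congrArg (fun n : ℕ => (n:ℚ)) (Nat.choose_mul_factorial_mul_factorial hα')
      have hF : (α.factorial : ℚ) ≠ 0 := Nat.cast_ne_zero.mpr (Nat.factorial_ne_zero α)
      have hG : ((j - α).factorial : ℚ) ≠ 0 := Nat.cast_ne_zero.mpr (Nat.factorial_ne_zero _)
      have hJ : (j.factorial : ℚ) ≠ 0 := Nat.cast_ne_zero.mpr (Nat.factorial_ne_zero _)
      rw [pow_zero, mul_one, div_eq_div_iff (mul_ne_zero hF hG) hJ]
      linear_combination (-(-1:ℚ)^α) * hq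
    rw [Finset.sum_congr rfl e1, ← Finset.sum_div, key, zero_div]
  | succ i ih =>
    intro j hj
    obtain ⟨m, rfl⟩ : ∃ m, j = m + 1 := ⟨j - 1, by omega⟩
    rw [Sc_rec, ih (m+1) (by omega), ih m (by omega)]
    ring

lemma δop_single (j : ℕ) (c : Polynomial ℚ) :
    δop (Finsupp.single j c) =
      Finsupp.single j (c * (-((j : Polynomial ℚ) + 1))) +
        Finsupp.single (j + 1) (c * (-Polynomial.X)) := by
  rw [δop, Finsupp.lsum_single, LinearMap.toSpanSingleton_apply, smul_add,
    Finsupp.smul_single, Finsupp.smul_single, smul_eq_mul, smul_eq_mul]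

theorem stmt6 (i : ℕ) :
    (δop ^ i) (Finsupp.single 0 1) =
      ∑ j ∈ Finset.range (i + 1),
        Finsupp.single j
          ((-1 : Polynomial ℚ) ^ (i + j) * Polynomial.X ^ j *
            Polynomial.C (∑ α ∈ Finset.range (j + 1),
              (-1 : ℚ) ^ α * ((α : ℚ) + 1) ^ i /
                ((α.factorial : ℚ) * ((j - α).factorial : ℚ)))) := by
  have hS : ∀ i j : ℕ, (∑ α ∈ Finset.range (j + 1),
      (-1 : ℚ) ^ α * ((α : ℚ) + 1) ^ i /
        ((α.factorial : ℚ) * ((j - α).factorial : ℚ))) = Sc i j := fun _ _ => rfl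
  simp only [hS]
  induction i with
  | zero =>
    rw [pow_zero, Module.End.one_apply, Finset.sum_range_one, Sc_zero_right]
    norm_num
  | succ i ih =>
    rw [pow_succ', Module.End.mul_apply, ih, map_sum]
    set A : ℕ → ℕ → Polynomial ℚ := fun i j =>
      (-1 : Polynomial ℚ) ^ (i + j) * Polynomial.X ^ j * Polynomial.C (Sc i j) with hA
    have hzero : A i (i + 1) = 0 := by
      simp only [hA]; rw [Sc_eq_zero i (i+1) (by omega)]; simp
    ext k : 1
    simp only [Finsupp.coe_finset_sum, Finset.sum_apply, δop_single, Finsupp.add_apply,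
      Finsupp.single_apply]
    rw [Finset.sum_add_distrib, Finset.sum_ite_eq' (Finset.range (i+1)) k,
      Finset.sum_ite_eq' (Finset.range (i+2)) k]
    match k with
    | 0 =>
      simp only [Nat.succ_ne_zero, if_false, Finset.sum_const_zero, add_zero]
      rw [if_pos (by simp : (0:ℕ) ∈ Finset.range (i+1)),
        if_pos (by simp : (0:ℕ) ∈ Finset.range (i+2))]
      simp only [hA, Sc_zero_right, Nat.add_zero, pow_zero, Polynomial.C_1, mul_one]
      push_cast
      ring
    | (m+1) =>
      have hrw : ∀ j, (j + 1 = m + 1) = (j = m) := by intro j; simp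
      simp only [hrw, Finset.sum_ite_eq' (Finset.range (i+1)) m]
      by_cases hm : m ≤ i
      · have h1 : m ∈ Finset.range (i+1) := by simp; omega
        have h2 : m + 1 ∈ Finset.range (i+2) := by simp; omega
        rw [if_pos h1, if_pos h2]
        have h3 : (if m + 1 ∈ Finset.range (i+1) then A i (m+1) * -((↑(m+1) : Polynomial ℚ) + 1) else 0)
            = A i (m+1) * -((↑(m+1) : Polynomial ℚ) + 1) := by
          by_cases h : m + 1 ∈ Finset.range (i+1)
          · rw [if_pos h]
          · have : m = i := by simp at h; omega
            subst this
            rw [if_neg h, hzero, zero_mul]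
        rw [h3]
        simp only [hA]
        rw [Sc_rec, map_sub, map_mul, map_add, Polynomial.C_eq_natCast,
          map_ofNat Polynomial.C 2]
        push_cast
        ring
      · have h1 : m ∉ Finset.range (i+1) := by simp; omega
        have h2 : m + 1 ∉ Finset.range (i+2) := by simp; omega
        have h3 : m + 1 ∉ Finset.range (i+1) := by simp; omega
        rw [if_neg h1, if_neg h2, if_neg h3, add_zero]
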